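/- Let P be an irreducible stochastic matrix on finite W with stationary distribution π, and let B ∈ W. Let P_{≠B} be P with the column of B set to zero. Then I − P_{≠B} is invertible and ((I − P_{≠B})^{-1})_{ij} = Q_{ij} + (Q_{BB} + (I−Q)_{iB})·π_j/π_B − Q_{Bj}, where Q := (I−P)^#. -/

import Mathlib

open Finset

section helpers

variable {W : Type*} [Fintype W] [DecidableEq W]

private lemma pow_nonneg' (P : Matrix W W ℝ) (hnn : ∀ i j, 0 ≤ P i j) :
    ∀ n i j, 0 ≤ (P ^ n) i j := by
  intro n
  induction n with
  | zero => intro i j; simp only [pow_zero, Matrix.one_apply]; split <;> norm_num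
  | succ n ih =>
      intro i j
      rw [pow_succ, Matrix.mul_apply]
      exact Finset.sum_nonneg fun k _ => mul_nonneg (ih i k) (hnn k j)

private lemma pow_row' (P : Matrix W W ℝ) (hrow : ∀ i, ∑ j, P i j = 1) :
    ∀ n i, ∑ j, (P ^ n) i j = 1 := by
  intro n
  induction n with
  | zero => intro i; simp [Matrix.one_apply]
  | succ n ih =>
      intro i
      simp only [pow_succ, Matrix.mul_apply]
      rw [Finset.sum_comm]
      calc ∑ k, ∑ j, (P ^ n) i k * P k j
          = ∑ k, (P ^ n) i k * ∑ j, P k j := by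
            simp [Finset.mul_sum]
        _ = 1 := by simp [hrow, ih i]

private lemma pow_fixed (P : Matrix W W ℝ) (x : W → ℝ)
    (hx : ∀ i, ∑ j, P i j * x j = x i) :
    ∀ n i, ∑ j, (P ^ n) i j * x j = x i := by
  intro n
  induction n with
  | zero => intro i; simp [Matrix.one_apply, Finset.sum_ite_eq]
  | succ n ih =>
      intro i
      simp only [pow_succ', Matrix.mul_apply]
      calc ∑ j, (∑ k, P i k * (P ^ n) k j) * x j
          = ∑ j, ∑ k, P i k * ((P ^ n) k j * x j) := by
            refine Finset.sum_congr rfl fun j _ => ?_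
            rw [Finset.sum_mul]
            exact Finset.sum_congr rfl fun k _ => by ring
        _ = ∑ k, P i k * ∑ j, (P ^ n) k j * x j := by
            rw [Finset.sum_comm]
            exact Finset.sum_congr rfl fun k _ => (Finset.mul_sum _ _ _).symm
        _ = ∑ k, P i k * x k := by simp [ih]
        _ = x i := hx i

/-- Maximum principle: harmonic functions of an irreducible chain are constant. -/
private lemma harmonic_const (P : Matrix W W ℝ) (hnn : ∀ i j, 0 ≤ P i j)
    (hrow : ∀ i, ∑ j, P i j = 1)
    (hirr : ∀ i j, ∃ n : ℕ, 1 ≤ n ∧ 0 < (P ^ n) i j)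
    (hne : Nonempty W)
    (x : W → ℝ) (hx : ∀ i, ∑ j, P i j * x j = x i) :
    ∀ i j, x i = x j := by
  obtain ⟨i₀, -, hi₀⟩ := Finset.exists_max_image (Finset.univ : Finset W) x
    ⟨hne.some, Finset.mem_univ _⟩
  have key : ∀ j, x j = x i₀ := by
    intro j
    obtain ⟨n, -, hpos⟩ := hirr i₀ j
    have hsum : ∑ k, (P ^ n) i₀ k * (x i₀ - x k) = 0 := by
      have ha := pow_row' P hrow n i₀
      have hb := pow_fixed P x hx n i₀
      calc ∑ k, (P ^ n) i₀ k * (x i₀ - x k)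
          = (∑ k, (P ^ n) i₀ k) * x i₀ - ∑ k, (P ^ n) i₀ k * x k := by
            rw [Finset.sum_mul, ← Finset.sum_sub_distrib]
            exact Finset.sum_congr rfl fun k _ => by ring
        _ = 0 := by rw [ha, hb]; ring
    have hterm : ∀ k ∈ Finset.univ, 0 ≤ (P ^ n) i₀ k * (x i₀ - x k) := fun k _ =>
      mul_nonneg (pow_nonneg' P hnn n i₀ k)
        (sub_nonneg.mpr (hi₀ k (Finset.mem_univ k)))
    have hz := (Finset.sum_eq_zero_iff_of_nonneg hterm).mp hsum j (Finset.mem_univ j)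
    rcases mul_eq_zero.mp hz with h | h
    · exact absurd h (ne_of_gt hpos)
    · linarith
  intro i j
  rw [key i, key j]

end helpers

theorem statement18 {W : Type*} [Fintype W] [DecidableEq W] (P : Matrix W W ℝ)
    (hnn : ∀ i j, 0 ≤ P i j) (hrow : ∀ i, ∑ j, P i j = 1)
    (hirr : ∀ i j, ∃ n : ℕ, 1 ≤ n ∧ 0 < (P ^ n) i j)
    (π : W → ℝ) (hπnn : ∀ i, 0 ≤ π i) (hπ1 : ∑ i, π i = 1)
    (hstat : ∀ j, ∑ i, π i * P i j = π j)
    (Q : Matrix W W ℝ)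
    (h1 : (1 - P) * Q = Q * (1 - P))
    (h2 : (1 - P) * Q * (1 - P) = 1 - P)
    (h3 : Q * (1 - P) * Q = Q)
    (B : W) :
    IsUnit (1 - Matrix.of (fun i j => if j = B then 0 else P i j)) ∧
    ∀ i j, (1 - Matrix.of (fun i j => if j = B then (0:ℝ) else P i j))⁻¹ i j =
      Q i j + (Q B B + (1 - Q) i B) * π j / π B - Q B j := by
  have hne : Nonempty W := ⟨B⟩
  -- stationarity for powers
  have hπstat : ∀ n j, ∑ i, π i * (P ^ n) i j = π j := by
    intro n
    induction n with
    | zero => intro j; simp [Matrix.one_apply, Finset.sum_ite_eq']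
    | succ n ih =>
        intro j
        simp only [pow_succ, Matrix.mul_apply]
        calc ∑ i, π i * ∑ k, (P ^ n) i k * P k j
            = ∑ i, ∑ k, (π i * (P ^ n) i k) * P k j := by
              refine Finset.sum_congr rfl fun i _ => ?_
              rw [Finset.mul_sum]
              exact Finset.sum_congr rfl fun k _ => by ring
          _ = ∑ k, (∑ i, π i * (P ^ n) i k) * P k j := by
              rw [Finset.sum_comm]
              exact Finset.sum_congr rfl fun k _ => (Finset.sum_mul _ _ _).symm
          _ = π j := by simp only [ih]; exact hstat j
  have hπB : 0 < π B := by
    obtain ⟨i, hi⟩ : ∃ i, 0 < π i := by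
      by_contra h
      push_neg at h
      have hz : ∀ i, π i = 0 := fun i => le_antisymm (h i) (hπnn i)
      simp [hz] at hπ1
    obtain ⟨n, -, hpos⟩ := hirr i B
    have heq := hπstat n B
    have hle : π i * (P ^ n) i B ≤ ∑ k, π k * (P ^ n) k B :=
      Finset.single_le_sum (fun k _ => mul_nonneg (hπnn k) (pow_nonneg' P hnn n k B))
        (Finset.mem_univ i)
    rw [heq] at hle
    calc (0:ℝ) < π i * (P ^ n) i B := mul_pos hi hpos
      _ ≤ π B := hle
  have hπBne : π B ≠ 0 := ne_of_gt hπB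
  -- key lemma: (1-P)*Q = 1 - 𝟙πᵀ entrywise
  have K1 : ∀ i j, ((1 - P) * Q) i j = (if i = j then (1:ℝ) else 0) - π j := by
    have hπ1P : ∀ k, ∑ i, π i * ((if i = k then (1:ℝ) else 0) - P i k) = 0 := by
      intro k
      simp only [mul_sub]
      rw [Finset.sum_sub_distrib]
      have hid : ∑ i, π i * (if i = k then (1:ℝ) else 0) = π k := by
        simp [mul_ite, Finset.sum_ite_eq']
      rw [hid, hstat k, sub_self]
    set E : Matrix W W ℝ := 1 - (1 - P) * Q with hE
    have hPE : P * E = E := by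
      have h0 : (1 - P) * E = 0 := by
        have hmm : (1 - P) * ((1 - P) * Q) = 1 - P := by
          rw [h1, ← mul_assoc, h2]
        rw [hE, mul_sub, mul_one, hmm, sub_self]
      have hsub : E - P * E = 0 := by
        calc E - P * E = (1 - P) * E := by noncomm_ring
          _ = 0 := h0
      exact (sub_eq_zero.mp hsub).symm
    -- columns of E are constant
    have hconst : ∀ j i i', E i j = E i' j := by
      intro j i i'
      have hx : ∀ i, ∑ k, P i k * E k j = E i j := by
        intro i
        have hh := congrFun (congrFun hPE i) j
        rwa [Matrix.mul_apply] at hh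
      exact harmonic_const P hnn hrow hirr hne (fun i => E i j) hx i i'
    -- π is a left fixed vector of E
    have hπE : ∀ j, ∑ i, π i * E i j = π j := by
      intro j
      have hPQ : ∑ i, π i * ((1 - P) * Q) i j = 0 := by
        calc ∑ i, π i * ((1 - P) * Q) i j
            = ∑ i, ∑ k, (π i * ((if i = k then (1:ℝ) else 0) - P i k)) * Q k j := by
              refine Finset.sum_congr rfl fun i _ => ?_
              rw [Matrix.mul_apply, Finset.mul_sum]
              refine Finset.sum_congr rfl fun k _ => ?_
              simp only [Matrix.sub_apply, Matrix.one_apply]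
              ring
          _ = ∑ k, (∑ i, π i * ((if i = k then (1:ℝ) else 0) - P i k)) * Q k j := by
              rw [Finset.sum_comm]
              exact Finset.sum_congr rfl fun k _ => (Finset.sum_mul _ _ _).symm
          _ = 0 := Finset.sum_eq_zero fun k _ => by rw [hπ1P k, zero_mul]
      have hexp : ∀ i, π i * E i j
          = π i * (if i = j then (1:ℝ) else 0) - π i * ((1 - P) * Q) i j := by
        intro i
        simp only [hE, Matrix.sub_apply, Matrix.one_apply]
        ring
      calc ∑ i, π i * E i j
          = ∑ i, (π i * (if i = j then (1:ℝ) else 0) - π i * ((1 - P) * Q) i j) :=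
            Finset.sum_congr rfl fun i _ => hexp i
        _ = (∑ i, π i * (if i = j then (1:ℝ) else 0)) - ∑ i, π i * ((1 - P) * Q) i j :=
            Finset.sum_sub_distrib _ _
        _ = π j := by
            rw [hPQ]
            simp [mul_ite, Finset.sum_ite_eq']
    intro i j
    have hEij : E i j = π j := by
      calc E i j = ∑ k, π k * E i j := by rw [← Finset.sum_mul, hπ1, one_mul]
        _ = ∑ k, π k * E k j :=
            Finset.sum_congr rfl fun k _ => by rw [hconst j i k]
        _ = π j := hπE j
    have hh : (if i = j then (1:ℝ) else 0) - ((1 - P) * Q) i j = π j := by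
      have := hEij
      simpa only [hE, Matrix.sub_apply, Matrix.one_apply] using this
    linarith
  -- now the main computation
  set A : Matrix W W ℝ := 1 - Matrix.of (fun i j => if j = B then (0:ℝ) else P i j) with hA
  set M : Matrix W W ℝ :=
    Matrix.of (fun i j => Q i j + (Q B B + (1 - Q) i B) * π j / π B - Q B j) with hM
  have hAik : ∀ i k, A i k = (if i = k then (1:ℝ) else 0) - (if k = B then 0 else P i k) := by
    intro i k
    simp [hA, Matrix.sub_apply, Matrix.one_apply]
  -- basic sums
  have SA : ∀ i, ∑ k, A i k = P i B := by
    intro i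
    simp only [hAik]
    rw [Finset.sum_sub_distrib]
    have e1 : ∑ k, (if i = k then (1:ℝ) else 0) = 1 := by simp
    have e2 : ∑ k, (if k = B then (0:ℝ) else P i k) = 1 - P i B := by
      have : ∀ k, (if k = B then (0:ℝ) else P i k) = P i k - (if k = B then P i k else 0) := by
        intro k; split <;> simp
      simp only [this]
      rw [Finset.sum_sub_distrib, hrow i, Finset.sum_ite_eq']
      simp
    rw [e1, e2]; ring
  have SQ : ∀ i j', ∑ k, A i k * Q k j'
      = (if i = j' then (1:ℝ) else 0) - π j' + P i B * Q B j' := by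
    intro i j'
    have hsplit : ∀ k, A i k * Q k j'
        = (1 - P) i k * Q k j' + (if k = B then P i B * Q B j' else 0) := by
      intro k
      rw [hAik]
      simp only [Matrix.sub_apply, Matrix.one_apply]
      rcases eq_or_ne k B with rfl | hk
      · simp only [if_pos rfl]
        split_ifs <;> ring
      · simp only [if_neg hk]
        split_ifs <;> ring
    calc ∑ k, A i k * Q k j'
        = ∑ k, ((1 - P) i k * Q k j' + (if k = B then P i B * Q B j' else 0)) :=
          Finset.sum_congr rfl fun k _ => hsplit k
      _ = ((1 - P) * Q) i j' + P i B * Q B j' := by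
          rw [Finset.sum_add_distrib, ← Matrix.mul_apply, Finset.sum_ite_eq']
          simp
      _ = (if i = j' then (1:ℝ) else 0) - π j' + P i B * Q B j' := by rw [K1]
  have hAM : A * M = 1 := by
    ext i j
    rw [Matrix.mul_apply]
    have hsplit : ∀ k, A i k * M k j
        = A i k * Q k j + (A i k * (Q B B - Q k B)) * (π j / π B)
          + (if k = B then A i B else 0) * (π j / π B) - A i k * Q B j := by
      intro k
      simp only [hM, Matrix.of_apply, Matrix.sub_apply, Matrix.one_apply]
      rcases eq_or_ne k B with rfl | hk
      · simp only [if_pos rfl]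
        split_ifs <;> ring
      · simp only [if_neg hk]
        ring
    have hAiB : A i B = (if i = B then (1:ℝ) else 0) := by
      rw [hAik]; simp
    calc ∑ k, A i k * M k j
        = ∑ k, (A i k * Q k j + (A i k * (Q B B - Q k B)) * (π j / π B)
            + (if k = B then A i B else 0) * (π j / π B) - A i k * Q B j) :=
          Finset.sum_congr rfl fun k _ => hsplit k
      _ = (∑ k, A i k * Q k j) + (∑ k, A i k * (Q B B - Q k B)) * (π j / π B)
            + A i B * (π j / π B) - (∑ k, A i k) * Q B j := by
          rw [Finset.sum_sub_distrib, Finset.sum_add_distrib, Finset.sum_add_distrib,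
            ← Finset.sum_mul, ← Finset.sum_mul, ← Finset.sum_mul,
            Finset.sum_ite_eq' Finset.univ B (fun _ => A i B)]
          simp
      _ = (1 : Matrix W W ℝ) i j := by
          have e1 := SQ i j
          have e2 : ∑ k, A i k * (Q B B - Q k B) = π B - (if i = B then (1:ℝ) else 0) := by
            have : ∀ k, A i k * (Q B B - Q k B) = Q B B * A i k - A i k * Q k B := by
              intro k; ring
            simp only [this]
            rw [Finset.sum_sub_distrib, ← Finset.mul_sum, SA i, SQ i B]
            ring
          rw [e1, e2, SA i, hAiB, Matrix.one_apply]
          field_simp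
          split_ifs <;> ring
  have hdet : IsUnit A.det := Matrix.isUnit_det_of_right_inverse hAM
  refine ⟨(Matrix.isUnit_iff_isUnit_det A).mpr hdet, ?_⟩
  intro i j
  rw [Matrix.inv_eq_right_inv hAM]
  simp [hM]
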